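/- Let A be a commutative ring (possibly without unit) that is a module over a binomial ring R, and suppose binom(a,n) ∈ A for every a ∈ A and n > 0 (computed in A ⊗ ℚ, with A torsion-free). Then R ⊕ A carries a natural commutative ring structure with unit 1 ∈ R, given by (r+a)(s+b) = rs + rb + sa + ab, and R ⊕ A is a binomial ring; moreover ζ_n(r + a) = ∑_{i+j=n} ζ_i(r)·ζ_j(a). -/

import Mathlib

open Polynomial Finset Finset.Nat

section Aux

variable {R A : Type*} [CommRing R] [BinomialRing R]
    [NonUnitalCommRing A] [Module R A] [IsScalarTower R A A] [SMulCommClass R A A]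
    [NoZeroSMulDivisors ℤ A]

private lemma aux_smeval_eq_eval₂ {S : Type*} [CommRing S] (p : ℤ[X]) (x : S) :
    p.smeval x = p.eval₂ (Int.castRingHom S) x := by
  rw [← eval₂_smulOneHom_eq_smeval]
  congr 1
  exact Subsingleton.elim _ _

private lemma aux_descPoch_smeval_eval {S : Type*} [CommRing S] (n : ℕ) (x : S) :
    (descPochhammer ℤ n).smeval x = (descPochhammer S n).eval x := by
  rw [aux_smeval_eq_eval₂, ← eval_map, descPochhammer_map (Int.castRingHom S)]

private lemma aux_smeval_inl (p : ℤ[X]) (r : R) :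
    p.smeval (Unitization.inl r : Unitization R A) = Unitization.inl (p.smeval r) := by
  rw [aux_smeval_eq_eval₂, aux_smeval_eq_eval₂]
  have h := Polynomial.hom_eval₂ p (Int.castRingHom R) (Unitization.inlRingHom R A) r
  have h2 : (Unitization.inlRingHom R A).comp (Int.castRingHom R)
      = Int.castRingHom (Unitization R A) := Subsingleton.elim _ _
  rw [h2] at h
  exact h.symm

private lemma aux_fst_nsmul (n : ℕ) (x : Unitization R A) : (n • x).fst = n • x.fst := by
  induction n with
  | zero => simp
  | succ k ih => rw [succ_nsmul, succ_nsmul, Unitization.fst_add, ih]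

private lemma aux_snd_nsmul (n : ℕ) (x : Unitization R A) : (n • x).snd = n • x.snd := by
  induction n with
  | zero => simp
  | succ k ih => rw [succ_nsmul, succ_nsmul, Unitization.snd_add, ih]

private lemma aux_nsmul_inj (n : ℕ) (h : n ≠ 0) :
    Function.Injective (n • · : Unitization R A → Unitization R A) := by
  intro x y hxy
  refine Unitization.ext ?_ ?_
  · apply @IsAddTorsionFree.nsmul_right_injective R _ BinomialRing.toIsAddTorsionFree n h
    show n • x.fst = n • y.fst
    have := congrArg (fun z : Unitization R A => z.fst) hxy
    rwa [aux_fst_nsmul, aux_fst_nsmul] at this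
  · have h1 := congrArg (fun z : Unitization R A => z.snd) hxy
    simp only [aux_snd_nsmul] at h1
    have h2 : (n : ℤ) • x.snd = (n : ℤ) • y.snd := by
      rwa [natCast_zsmul, natCast_zsmul]
    exact smul_right_injective A (by exact_mod_cast h) h2

variable (hbin : ∀ (a : A) (n : ℕ), 0 < n → ∃ b : A,
      n.factorial • (Unitization.inr b : Unitization R A)
        = (descPochhammer (Unitization R A) n).eval (Unitization.inr a))

include hbin in
private lemma aux_exists_desc (x : Unitization R A) (n : ℕ) :
    ∃ y : Unitization R A, n.factorial • y = (descPochhammer ℤ n).smeval x := by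
  classical
  have hA : ∀ j : ℕ, ∃ v : Unitization R A,
      j.factorial • v = (descPochhammer ℤ j).smeval (Unitization.inr x.snd) := by
    intro j
    rcases Nat.eq_zero_or_pos j with h | h
    · subst h
      exact ⟨1, by simp [descPochhammer_zero, smeval_one]⟩
    · obtain ⟨b, hb⟩ := hbin x.snd j h
      exact ⟨Unitization.inr b, by rw [hb, aux_descPoch_smeval_eval]⟩
  choose v hv using hA
  refine ⟨∑ ij ∈ antidiagonal n, Unitization.inl (Ring.choose x.fst ij.1) * v ij.2, ?_⟩
  rw [smul_sum]
  conv_rhs => rw [← Unitization.inl_fst_add_inr_snd_eq x]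
  rw [Ring.descPochhammer_smeval_add n (Commute.all _ _)]
  refine Finset.sum_congr rfl fun ij hij => ?_
  have hle : ij.1 ≤ n := Finset.HasAntidiagonal.antidiagonal.fst_le hij
  have hsum : ij.1 + ij.2 = n := Finset.HasAntidiagonal.mem_antidiagonal.mp hij
  rw [aux_smeval_inl, Ring.descPochhammer_eq_factorial_smul_choose, ← hv ij.2,
    Unitization.inl_smul]
  rw [show ((n.choose ij.1 : ℕ) : Unitization R A) *
      ((ij.1.factorial • Unitization.inl (Ring.choose x.fst ij.1)) * (ij.2.factorial • v ij.2))
      = (n.choose ij.1 * (ij.1.factorial * ij.2.factorial)) •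
        (Unitization.inl (Ring.choose x.fst ij.1) * v ij.2) by
    rw [mul_smul, mul_smul, ← nsmul_eq_mul, smul_mul_assoc, mul_smul_comm]]
  congr 1
  rw [← mul_assoc, show ij.2 = n - ij.1 from by omega,
    Nat.choose_mul_factorial_mul_factorial hle]

include hbin in
private lemma aux_exists_asc (x : Unitization R A) (n : ℕ) :
    ∃ y : Unitization R A, n.factorial • y = (ascPochhammer ℕ n).smeval x := by
  obtain ⟨y, hy⟩ := aux_exists_desc hbin (x + n - 1) n
  refine ⟨y, ?_⟩
  rw [hy, Polynomial.descPochhammer_smeval_eq_ascPochhammer]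
  congr 1
  ring

end Aux

theorem stmt_4 (R A : Type*) [CommRing R] [BinomialRing R]
    [NonUnitalCommRing A] [Module R A] [IsScalarTower R A A] [SMulCommClass R A A]
    [NoZeroSMulDivisors ℤ A]
    (hbin : ∀ (a : A) (n : ℕ), 0 < n → ∃ b : A,
      n.factorial • (Unitization.inr b : Unitization R A)
        = (descPochhammer (Unitization R A) n).eval (Unitization.inr a)) :
    ∃ inst : BinomialRing (Unitization R A),
      (∀ (r s : R) (a b : A),
        (Unitization.inl r + Unitization.inr a) *
            (Unitization.inl s + Unitization.inr b)
          = (Unitization.inl (r * s) : Unitization R A)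
            + Unitization.inr (r • b + s • a + a * b)) ∧
      (∀ (r : R) (a : A) (n : ℕ),
        letI := inst
        Ring.choose (Unitization.inl r + Unitization.inr a : Unitization R A) n
          = ∑ k ∈ Finset.range (n + 1),
              Unitization.inl (Ring.choose r k) *
                Ring.choose (Unitization.inr a : Unitization R A) (n - k)) := by
  classical
  letI inst : BinomialRing (Unitization R A) :=
    { toIsAddTorsionFree := ⟨aux_nsmul_inj⟩
      multichoose := fun x n => (aux_exists_asc hbin x n).choose
      factorial_nsmul_multichoose := fun x n => (aux_exists_asc hbin x n).choose_spec }
  refine ⟨inst, ?_, ?_⟩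
  · intro r s a b
    rw [mul_add, add_mul, add_mul, Unitization.inl_mul_inl, Unitization.inl_mul_inr,
      Unitization.inr_mul_inl, ← Unitization.inr_mul, Unitization.inr_add,
      Unitization.inr_add]
    abel
  · intro r a n
    have hinl : ∀ (r : R) (k : ℕ),
        Ring.choose (Unitization.inl r : Unitization R A) k
          = Unitization.inl (Ring.choose r k) := by
      intro r k
      apply aux_nsmul_inj k.factorial (Nat.factorial_ne_zero k)
      show k.factorial • _ = k.factorial • _
      rw [← Ring.descPochhammer_eq_factorial_smul_choose, aux_smeval_inl,
        Ring.descPochhammer_eq_factorial_smul_choose, Unitization.inl_smul]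
    rw [Ring.add_choose_eq n (Commute.all _ _),
      Finset.Nat.sum_antidiagonal_eq_sum_range_succ_mk]
    exact Finset.sum_congr rfl fun k _ => by rw [hinl]
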